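/- Let n ≥ 2 and let x₁,…,xₙ be real numbers with 0 ≤ xᵢ ≤ π for all i and Σ xᵢ = (n−2)π. Then Σ cos(xᵢ) ≥ min(1 + (n−1)·cos((n−2)π/(n−1)), n·cos((n−2)π/n)). -/

import Mathlib

open Real Set Finset

lemma sin_le_sin' {a b : ℝ} (ha : 0 ≤ a) (hab : a ≤ b) (hb : b ≤ π - a) :
    Real.sin a ≤ Real.sin b := by
  rcases le_or_gt b (π/2) with h | h
  · exact Real.strictMonoOn_sin.monotoneOn ⟨by linarith, by linarith⟩ ⟨by linarith, h⟩ hab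
  · rw [← Real.sin_pi_sub b]
    exact Real.strictMonoOn_sin.monotoneOn ⟨by linarith, by linarith⟩
      ⟨by linarith, by linarith⟩ (by linarith)

lemma cos_pair {a b : ℝ} (ha0 : 0 ≤ a) (haπ : a ≤ π) (hb0 : 0 ≤ b) (hbπ : b ≤ π)
    (hab : π ≤ a + b) : Real.cos a + Real.cos b ≤ -1 - Real.cos (a + b) := by
  have h1 : Real.cos a + Real.cos b = 2 * Real.cos ((a+b)/2) * Real.cos ((a-b)/2) :=
    Real.cos_add_cos a b
  have h2' := Real.cos_sq ((a+b)/2)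
  rw [show 2 * ((a+b)/2) = a + b by ring] at h2'
  have h3 : Real.cos ((a+b)/2) + Real.cos ((a-b)/2) = 2 * Real.cos (a/2) * Real.cos (b/2) := by
    have h := Real.cos_add_cos ((a+b)/2) ((a-b)/2)
    rw [show ((a+b)/2 + (a-b)/2)/2 = a/2 by ring, show ((a+b)/2 - (a-b)/2)/2 = b/2 by ring] at h
    exact h
  have hc1 : Real.cos ((a+b)/2) ≤ 0 :=
    Real.cos_nonpos_of_pi_div_two_le_of_le (by linarith) (by linarith [Real.pi_pos])
  have hc2 : 0 ≤ Real.cos (a/2) :=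
    Real.cos_nonneg_of_mem_Icc ⟨by linarith [Real.pi_pos], by linarith⟩
  have hc3 : 0 ≤ Real.cos (b/2) :=
    Real.cos_nonneg_of_mem_Icc ⟨by linarith [Real.pi_pos], by linarith⟩
  have key : Real.cos a + Real.cos b + 1 + Real.cos (a+b)
      = 4 * Real.cos ((a+b)/2) * (Real.cos (a/2) * Real.cos (b/2)) := by
    nlinarith [h1, h2', h3]
  nlinarith [mul_nonneg hc2 hc3, key,
    mul_nonpos_of_nonpos_of_nonneg hc1 (mul_nonneg hc2 hc3)]

lemma cos_sub_cos_le {c r : ℝ} (hc : π/2 ≤ c) (hr : 0 ≤ r) (hcr : c + r ≤ π) :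
    Real.cos c - Real.cos (r + c) ≤ Real.sin r := by
  have h1 : Real.cos c - Real.cos (r + c)
      = 2 * Real.sin (c + r/2) * Real.sin (r/2) := by
    have h := Real.cos_sub_cos c (r + c)
    rw [show (c + (r+c))/2 = c + r/2 by ring, show (c - (r+c))/2 = -(r/2) by ring,
      Real.sin_neg] at h
    linarith [h]
  have h2 : Real.sin (c + r/2) ≤ Real.sin (π/2 - r/2) := by
    rw [← Real.sin_pi_sub (c + r/2)]
    exact sin_le_sin' (by linarith) (by linarith) (by linarith)
  have h3 : 0 ≤ Real.sin (r/2) := Real.sin_nonneg_of_nonneg_of_le_pi (by linarith)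
    (by linarith [Real.pi_pos])
  have h4 : Real.sin r = 2 * Real.sin (π/2 - r/2) * Real.sin (r/2) := by
    rw [Real.sin_pi_div_two_sub]
    rw [show r = 2 * (r/2) by ring, Real.sin_two_mul]
    ring_nf
  nlinarith [h1, h2, h3, h4]

lemma jensen_cos {n : ℕ} (Q : Finset (Fin n)) (hQ : Q.Nonempty) (y : Fin n → ℝ)
    (h0 : ∀ i ∈ Q, 0 ≤ y i) (h1 : ∀ i ∈ Q, y i ≤ π/2) :
    ∑ i ∈ Q, Real.cos (y i) ≤ Q.card * Real.cos ((∑ i ∈ Q, y i) / Q.card) := by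
  have hcard : (0:ℝ) < Q.card := by exact_mod_cast Finset.card_pos.mpr hQ
  have hconc := strictConcaveOn_cos_Icc.concaveOn
  have := hconc.le_map_sum (t := Q) (w := fun _ => (Q.card : ℝ)⁻¹) (p := y)
    (fun i _ => by positivity)
    (by rw [Finset.sum_const, nsmul_eq_mul]; field_simp)
    (fun i hi => ⟨by linarith [h0 i hi, Real.pi_pos], h1 i hi⟩)
  simp only [smul_eq_mul] at this
  rw [← Finset.mul_sum, ← Finset.mul_sum] at this
  rw [div_eq_inv_mul]
  calc ∑ i ∈ Q, Real.cos (y i) = Q.card * ((Q.card:ℝ)⁻¹ * ∑ i ∈ Q, Real.cos (y i)) := by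
        field_simp
    _ ≤ Q.card * Real.cos ((Q.card:ℝ)⁻¹ * ∑ i ∈ Q, y i) := by
        apply mul_le_mul_of_nonneg_left this hcard.le

lemma concave_pair_cos {p q a b : ℝ} (hp : p ∈ Icc (-(π/2)) (π/2)) (hq : q ∈ Icc (-(π/2)) (π/2))
    (ha : 0 ≤ a) (hb : 0 ≤ b) (hab : a + b = 1) :
    a * Real.cos p + b * Real.cos q ≤ Real.cos (a * p + b * q) := by
  have := strictConcaveOn_cos_Icc.concaveOn.2 hp hq ha hb hab
  simpa [smul_eq_mul] using this

lemma le_peak {f : ℝ → ℝ} {a b c r : ℝ} (hab : a ≤ b) (hbc : b ≤ c)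
    (hmono : MonotoneOn f (Icc a b)) (hanti : AntitoneOn f (Icc b c))
    (hr : r ∈ Icc a c) : f r ≤ f b := by
  rcases le_total r b with h | h
  · exact hmono ⟨hr.1, h⟩ ⟨hab, le_refl b⟩ h
  · exact hanti ⟨le_refl b, hbc⟩ ⟨h, hr.2⟩ h

lemma hasDerivAt_mcos {m : ℝ} (hm : m ≠ 0) (x : ℝ) :
    HasDerivAt (fun x : ℝ => m * Real.cos (x / m)) (-Real.sin (x / m)) x := by
  have h1 : HasDerivAt (fun x : ℝ => x / m) (1/m) x := (hasDerivAt_id x).div_const m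
  have h2 := (Real.hasDerivAt_cos (x/m)).comp x h1
  have h3 := h2.const_mul m
  refine h3.congr_deriv ?_
  field_simp

lemma psi_le {m r : ℝ} (hm : 1 ≤ m) (hr0 : 0 ≤ r) (hrπ : r ≤ π) :
    -1 - Real.cos r + m * Real.cos (r / m) ≤ (m+1) * Real.cos (π/(m+1)) - 1 := by
  have hm0 : (0:ℝ) < m := by linarith
  have hm1 : (0:ℝ) < m + 1 := by linarith
  have hπ := Real.pi_pos
  set b := m * π / (m + 1) with hb
  have hb0 : 0 ≤ b := by positivity
  have hbπ : b ≤ π := by rw [hb, div_le_iff₀ hm1]; nlinarith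
  set f : ℝ → ℝ := fun r => -1 - Real.cos r + m * Real.cos (r / m) with hf
  have hderiv : ∀ x : ℝ, HasDerivAt f (Real.sin x - Real.sin (x / m)) x := by
    intro x
    have h1 := (Real.hasDerivAt_cos x).const_sub (-1:ℝ)
    have := h1.add (hasDerivAt_mcos hm0.ne' x)
    refine this.congr_deriv ?_; ring
  have hdiff : Differentiable ℝ f := fun x => (hderiv x).differentiableAt
  have key : f r ≤ f b := by
    apply le_peak (f := f) (a := 0) (b := b) (c := π) hb0 hbπ
    · apply monotoneOn_of_deriv_nonneg (convex_Icc 0 b) (hdiff.continuous.continuousOn)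
        (hdiff.differentiableOn)
      intro x hx
      rw [interior_Icc] at hx
      rw [(hderiv x).deriv]
      have hx1 : (0:ℝ) ≤ x := hx.1.le
      have hxb : x * (m+1) ≤ m * π := by
        have := hx.2.le; rw [hb, le_div_iff₀ hm1] at this; linarith
      have : Real.sin (x/m) ≤ Real.sin x := by
        apply sin_le_sin' (div_nonneg hx1 hm0.le) _ _
        · rw [div_le_iff₀ hm0]; nlinarith
        · have h2 : x/m ≤ π - x := by rw [div_le_iff₀ hm0]; nlinarith
          linarith
      linarith
    · apply antitoneOn_of_deriv_nonpos (convex_Icc b π) (hdiff.continuous.continuousOn)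
        (hdiff.differentiableOn)
      intro x hx
      rw [interior_Icc] at hx
      rw [(hderiv x).deriv]
      have hx1 : (0:ℝ) ≤ x := le_trans hb0 hx.1.le
      have hxb : m * π ≤ x * (m+1) := by
        have := hx.1.le; rw [hb, div_le_iff₀ hm1] at this; linarith
      have : Real.sin x ≤ Real.sin (x/m) := by
        rw [← Real.sin_pi_sub x]
        apply sin_le_sin' (by linarith [hx.2.le]) _ _
        · rw [le_div_iff₀ hm0]; nlinarith
        · rw [div_le_iff₀ hm0]; nlinarith
      linarith
    · exact ⟨hr0, hrπ⟩
  have hval : f b = (m+1) * Real.cos (π/(m+1)) - 1 := by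
    rw [hf]
    have e1 : b = π - π/(m+1) := by rw [hb]; field_simp; ring
    have e2 : b / m = π/(m+1) := by rw [hb]; field_simp
    simp only [e2]
    rw [e1, Real.cos_pi_sub]
    ring
  exact le_of_le_of_eq key hval

lemma le_valley {f : ℝ → ℝ} {a b c r : ℝ} (hab : a ≤ b) (hbc : b ≤ c)
    (hanti : AntitoneOn f (Icc a b)) (hmono : MonotoneOn f (Icc b c))
    (hr : r ∈ Icc a c) : f r ≤ max (f a) (f c) := by
  rcases le_total r b with h | h
  · exact le_max_of_le_left (hanti ⟨le_refl a, hab⟩ ⟨hr.1, h⟩ hr.1)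
  · exact le_max_of_le_right (hmono ⟨h, hr.2⟩ ⟨hbc, le_refl c⟩ hr.2)

lemma hasDerivAt_ncos {N : ℝ} (hN : N ≠ 0) (x : ℝ) :
    HasDerivAt (fun t : ℝ => N * Real.cos ((2*π - t) / N)) (Real.sin ((2*π - x)/N)) x := by
  have h1 : HasDerivAt (fun t : ℝ => (2*π - t) / N) (-(1/N)) x := by
    have := ((hasDerivAt_id x).const_sub (2*π)).div_const N
    refine this.congr_deriv ?_
    ring
  have h2 := (Real.hasDerivAt_cos ((2*π - x)/N)).comp x h1
  have h3 := h2.const_mul N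
  refine h3.congr_deriv ?_
  field_simp

lemma xi_le {m r : ℝ} (hm : 1 ≤ m) (hr0 : 0 ≤ r) (hrπ : r ≤ π/2) :
    -1 + Real.sin r + m * Real.cos (r / m) ≤ (m+1) * Real.cos (π/(2*(m+1))) - 1 := by
  have hm0 : (0:ℝ) < m := by linarith
  have hm1 : (0:ℝ) < m + 1 := by linarith
  have hπ := Real.pi_pos
  set b := m * π / (2*(m + 1)) with hb
  have hb0 : 0 ≤ b := by positivity
  have hbπ : b ≤ π/2 := by rw [hb, div_le_iff₀ (by linarith : (0:ℝ) < 2*(m+1))]; nlinarith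
  set f : ℝ → ℝ := fun r => -1 + Real.sin r + m * Real.cos (r / m) with hf
  have hderiv : ∀ x : ℝ, HasDerivAt f (Real.cos x - Real.sin (x / m)) x := by
    intro x
    have h1 := ((Real.hasDerivAt_sin x).const_add (-1:ℝ)).add (hasDerivAt_mcos hm0.ne' x)
    exact h1.congr_deriv (by ring)
  have hdiff : Differentiable ℝ f := fun x => (hderiv x).differentiableAt
  have key : f r ≤ f b := by
    apply le_peak (f := f) (a := 0) (b := b) (c := π/2) hb0 hbπ
    · apply monotoneOn_of_deriv_nonneg (convex_Icc 0 b) (hdiff.continuous.continuousOn)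
        (hdiff.differentiableOn)
      intro x hx
      rw [interior_Icc] at hx
      rw [(hderiv x).deriv]
      have hx1 : (0:ℝ) ≤ x := hx.1.le
      have hxb : x * (2*(m+1)) ≤ m * π := by
        have := hx.2.le; rw [hb, le_div_iff₀ (by linarith : (0:ℝ) < 2*(m+1))] at this; linarith
      have : Real.sin (x/m) ≤ Real.sin (π/2 - x) := by
        apply sin_le_sin' (div_nonneg hx1 hm0.le) _ _
        · rw [div_le_iff₀ hm0]; nlinarith
        · have h2 : x/m ≤ x := by rw [div_le_iff₀ hm0]; nlinarith
          linarith
      rw [Real.sin_pi_div_two_sub] at this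
      linarith
    · apply antitoneOn_of_deriv_nonpos (convex_Icc b (π/2)) (hdiff.continuous.continuousOn)
        (hdiff.differentiableOn)
      intro x hx
      rw [interior_Icc] at hx
      rw [(hderiv x).deriv]
      have hx1 : (0:ℝ) ≤ x := le_trans hb0 hx.1.le
      have hxb : m * π ≤ x * (2*(m+1)) := by
        have := hx.1.le; rw [hb, div_le_iff₀ (by linarith : (0:ℝ) < 2*(m+1))] at this; linarith
      have : Real.sin (π/2 - x) ≤ Real.sin (x/m) := by
        apply sin_le_sin' (by linarith [hx.2.le]) _ _
        · rw [le_div_iff₀ hm0]; nlinarith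
        · have h2 : x/m ≤ x := by rw [div_le_iff₀ hm0]; nlinarith
          linarith
      rw [Real.sin_pi_div_two_sub] at this
      linarith
    · exact ⟨hr0, hrπ⟩
  have hval : f b = (m+1) * Real.cos (π/(2*(m+1))) - 1 := by
    rw [hf]
    have e1 : b = π/2 - π/(2*(m+1)) := by rw [hb]; field_simp; ring
    have e2 : b / m = π/(2*(m+1)) := by rw [hb]; field_simp
    simp only [e2]
    rw [e1, Real.sin_pi_div_two_sub]
    ring
  exact le_of_le_of_eq key hval

lemma h_le {N t : ℝ} (hN : 3 ≤ N) (ht : t ∈ Icc (π/2) π) :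
    Real.cos t + N * Real.cos ((2*π - t)/N)
      ≤ max (N * Real.cos (π/N) - 1) ((N+1) * Real.cos (2*π/(N+1))) := by
  have hN0 : (0:ℝ) < N := by linarith
  have hN1 : (0:ℝ) < N - 1 := by linarith
  have hπ := Real.pi_pos
  set b := (N - 2) * π / (N - 1) with hb
  have hb1 : π/2 ≤ b := by rw [hb, le_div_iff₀ hN1]; nlinarith
  have hb2 : b ≤ π := by rw [hb, div_le_iff₀ hN1]; nlinarith
  set f : ℝ → ℝ := fun t => Real.cos t + N * Real.cos ((2*π - t)/N) with hf
  have hderiv : ∀ x : ℝ, HasDerivAt f (-Real.sin x + Real.sin ((2*π - x)/N)) x := by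
    intro x
    exact (Real.hasDerivAt_cos x).add (hasDerivAt_ncos hN0.ne' x)
  have hdiff : Differentiable ℝ f := fun x => (hderiv x).differentiableAt
  have key : f t ≤ max (f (π/2)) (f π) := by
    apply le_valley (f := f) (a := π/2) (b := b) (c := π) hb1 hb2
    · apply antitoneOn_of_deriv_nonpos (convex_Icc _ _) (hdiff.continuous.continuousOn)
        (hdiff.differentiableOn)
      intro x hx
      rw [interior_Icc] at hx
      rw [(hderiv x).deriv]
      have hx1 : π/2 < x := hx.1
      have hx2 : x < b := hx.2
      have hxb : x * (N - 1) ≤ (N - 2) * π := by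
        rw [hb, lt_div_iff₀ hN1] at hx2; linarith
      have hu0 : (0:ℝ) ≤ (2*π - x)/N := by
        apply div_nonneg _ hN0.le
        have : x ≤ π := le_trans hx2.le hb2
        linarith
      have : Real.sin ((2*π - x)/N) ≤ Real.sin x := by
        apply sin_le_sin' hu0 _ _
        · rw [div_le_iff₀ hN0]; nlinarith
        · have h2 : (2*π - x)/N ≤ π - x := by rw [div_le_iff₀ hN0]; nlinarith
          linarith
      linarith
    · apply monotoneOn_of_deriv_nonneg (convex_Icc _ _) (hdiff.continuous.continuousOn)
        (hdiff.differentiableOn)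
      intro x hx
      rw [interior_Icc] at hx
      have hx1 : b < x := hx.1
      have hx2 : x < π := hx.2
      rw [(hderiv x).deriv]
      have hxb : (N - 2) * π ≤ x * (N - 1) := by
        rw [hb, div_lt_iff₀ hN1] at hx1; linarith
      have hbhalf : π/2 ≤ x := le_trans hb1 hx1.le
      have : Real.sin x ≤ Real.sin ((2*π - x)/N) := by
        rw [← Real.sin_pi_sub x]
        apply sin_le_sin' (by linarith) _ _
        · rw [le_div_iff₀ hN0]; nlinarith
        · have h2 : (2*π - x)/N ≤ x := by rw [div_le_iff₀ hN0]; nlinarith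
          linarith
      linarith
    · exact ht
  have hval1 : f π = N * Real.cos (π/N) - 1 := by
    rw [hf]
    simp only
    rw [Real.cos_pi, show (2*π - π)/N = π/N by ring]
    ring
  have hval2 : f (π/2) ≤ (N+1) * Real.cos (2*π/(N+1)) := by
    have hNN : (0:ℝ) < N + 1 := by linarith
    have hcp := concave_pair_cos (p := π/2) (q := 3*π/(2*N)) (a := 1/(N+1)) (b := N/(N+1))
      ⟨by linarith, le_refl _⟩
      ⟨by have h3 : (0:ℝ) ≤ 3*π/(2*N) := by positivity
          linarith,
       by rw [div_le_div_iff₀ (by positivity) (by norm_num : (0:ℝ) < 2)]; nlinarith⟩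
      (by positivity) (by positivity) (by field_simp; ring)
    rw [Real.cos_pi_div_two] at hcp
    have e1 : 1/(N+1) * (π/2) + N/(N+1) * (3*π/(2*N)) = 2*π/(N+1) := by field_simp; ring
    rw [e1] at hcp
    have e2 : f (π/2) = N * Real.cos (3*π/(2*N)) := by
      rw [hf]; simp only
      rw [Real.cos_pi_div_two, show (2*π - π/2)/N = 3*π/(2*N) by ring]
      ring
    rw [e2]
    calc N * Real.cos (3*π/(2*N)) = (N+1) * (N/(N+1) * Real.cos (3*π/(2*N))) := by field_simp
      _ ≤ (N+1) * Real.cos (2*π/(N+1)) := by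
          apply mul_le_mul_of_nonneg_left _ hNN.le
          calc N/(N+1) * Real.cos (3*π/(2*N))
              = 1/(N+1) * 0 + N/(N+1) * Real.cos (3*π/(2*N)) := by ring
            _ ≤ _ := hcp
  calc Real.cos t + N * Real.cos ((2*π - t)/N) = f t := rfl
    _ ≤ max (f (π/2)) (f π) := key
    _ ≤ max (N * Real.cos (π/N) - 1) ((N+1) * Real.cos (2*π/(N+1))) := by
        exact max_le (le_max_of_le_right hval2) (le_max_of_le_left hval1.le)

lemma q_ineq {q : ℝ} (hq : q = 2 ∨ q = 3 ∨ 4 ≤ q) :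
    q * Real.cos (π/(2*q)) ≤ (q+1) * Real.cos (π/(q+1)) := by
  have hπ := Real.pi_pos
  rcases hq with rfl | rfl | hq
  · rw [show (2:ℝ)*2 = 4 by norm_num, show (2:ℝ)+1 = 3 by norm_num,
      Real.cos_pi_div_four, Real.cos_pi_div_three]
    nlinarith [Real.sq_sqrt (by norm_num : (2:ℝ) ≥ 0), Real.sqrt_nonneg 2]
  · rw [show (2:ℝ)*3 = 6 by norm_num, show (3:ℝ)+1 = 4 by norm_num,
      Real.cos_pi_div_six, Real.cos_pi_div_four]
    nlinarith [Real.sq_sqrt (by norm_num : (2:ℝ) ≥ 0), Real.sqrt_nonneg 2,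
      Real.sq_sqrt (by norm_num : (3:ℝ) ≥ 0), Real.sqrt_nonneg 3]
  · have hq0 : (0:ℝ) < q := by linarith
    have hq1 : (0:ℝ) < q + 1 := by linarith
    have h1 : q * Real.cos (π/(2*q)) ≤ q := by
      nlinarith [Real.cos_le_one (π/(2*q))]
    have h2 : 1 - (π/(q+1))^2/2 ≤ Real.cos (π/(q+1)) := Real.one_sub_sq_div_two_le_cos
    have hπ2 : π^2 ≤ 10 := by nlinarith [Real.pi_lt_d2.le]
    have h3 : q ≤ (q+1) * (1 - (π/(q+1))^2/2) := by
      rw [div_pow]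
      have e : (q+1) * (1 - π^2/(q+1)^2/2) = q + 1 - π^2/(2*(q+1)) := by
        field_simp
      rw [e]
      have : π^2/(2*(q+1)) ≤ 1 := by
        rw [div_le_one (by linarith)]; nlinarith
      linarith
    calc q * Real.cos (π/(2*q)) ≤ q := h1
      _ ≤ (q+1) * (1 - (π/(q+1))^2/2) := h3
      _ ≤ (q+1) * Real.cos (π/(q+1)) := by nlinarith [h2]

lemma key_lemma (n : ℕ) (hn : 4 ≤ n) (y : Fin n → ℝ) (h0 : ∀ i, 0 ≤ y i)
    (hpi : ∀ i, y i ≤ π) (hs : ∑ i, y i = 2*π) :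
    ∑ i, Real.cos (y i)
      ≤ max (((n:ℝ)-1) * Real.cos (π/((n:ℝ)-1)) - 1) ((n:ℝ) * Real.cos (2*π/(n:ℝ))) := by
  classical
  have hπ := Real.pi_pos
  have hn4 : (4:ℝ) ≤ (n:ℝ) := by exact_mod_cast hn
  set P := Finset.univ.filter (fun i => π/2 < y i) with hP
  set Q := Finset.univ.filter (fun i => ¬ π/2 < y i) with hQ
  have hsplitc : ∑ i ∈ P, Real.cos (y i) + ∑ i ∈ Q, Real.cos (y i) = ∑ i, Real.cos (y i) :=
    Finset.sum_filter_add_sum_filter_not _ _ _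
  have hsplity : ∑ i ∈ P, y i + ∑ i ∈ Q, y i = 2*π := by
    rw [Finset.sum_filter_add_sum_filter_not]; exact hs
  have hcard : P.card + Q.card = n := by
    rw [hP, hQ]; rw [Finset.card_filter_add_card_filter_not]; simp
  have hQ0 : (0:ℝ) ≤ ∑ i ∈ Q, y i := Finset.sum_nonneg fun i _ => h0 i
  have hQsmall : ∀ i ∈ Q, y i ≤ π/2 := by
    intro i hi; rw [hQ, Finset.mem_filter] at hi; exact not_lt.mp hi.2
  have hPbig : ∀ i ∈ P, π/2 < y i := by
    intro i hi; rw [hP, Finset.mem_filter] at hi; exact hi.2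
  have hk3 : P.card ≤ 3 := by
    by_contra hgt
    push_neg at hgt
    have hne : P.Nonempty := Finset.card_pos.mp (by omega)
    have hlt : ∑ _i ∈ P, (π/2) < ∑ i ∈ P, y i :=
      Finset.sum_lt_sum_of_nonempty hne hPbig
    rw [Finset.sum_const] at hlt
    have h4 : (4:ℝ) ≤ (P.card : ℝ) := by exact_mod_cast hgt
    have : (P.card : ℝ) * (π/2) < 2*π := by
      calc (P.card : ℝ) * (π/2) = P.card • (π/2) := by simp
        _ < ∑ i ∈ P, y i := hlt
        _ ≤ 2*π := by linarith
    nlinarith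
  -- Jensen for Q
  have hQjen : Q.Nonempty → ∑ i ∈ Q, Real.cos (y i)
      ≤ Q.card * Real.cos ((∑ i ∈ Q, y i) / Q.card) := by
    intro hne
    exact jensen_cos Q hne y (fun i _ => h0 i) hQsmall
  interval_cases hPc : P.card
  · -- k = 0
    have hall : ∀ i ∈ Finset.univ (α := Fin n), y i ≤ π/2 := by
      intro i _
      by_contra hgt
      have : i ∈ P := by rw [hP, Finset.mem_filter]; exact ⟨Finset.mem_univ i, not_le.mp hgt⟩
      rw [Finset.card_eq_zero.mp hPc] at this
      exact absurd this (Finset.notMem_empty i)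
    have hne' : Nonempty (Fin n) := ⟨⟨0, by omega⟩⟩
    have hune : (Finset.univ : Finset (Fin n)).Nonempty := Finset.univ_nonempty
    have := jensen_cos Finset.univ hune y (fun i _ => h0 i) hall
    rw [Finset.card_univ, Fintype.card_fin, hs] at this
    exact le_max_of_le_right this
  · -- k = 1
    obtain ⟨j, hj⟩ := Finset.card_eq_one.mp hPc
    have hjP : j ∈ P := by rw [hj]; exact Finset.mem_singleton_self j
    have hQcard : Q.card = n - 1 := by omega
    have hQne : Q.Nonempty := Finset.card_pos.mp (by omega)
    have hQcR : (Q.card : ℝ) = (n:ℝ) - 1 := by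
      rw [hQcard]; push_cast [Nat.cast_sub (by omega : 1 ≤ n)]; ring
    have hPsum : ∑ i ∈ P, y i = y j := by rw [hj, Finset.sum_singleton]
    have hPsumc : ∑ i ∈ P, Real.cos (y i) = Real.cos (y j) := by
      rw [hj, Finset.sum_singleton]
    have hQsumE : ∑ i ∈ Q, y i = 2*π - y j := by rw [← hPsum]; linarith
    have hjen := hQjen hQne
    rw [hQsumE, hQcR] at hjen
    have hh := h_le (N := (n:ℝ)-1) (by linarith) (t := y j) ⟨(hPbig j hjP).le, hpi j⟩
    rw [show (n:ℝ)-1+1 = (n:ℝ) by ring] at hh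
    calc ∑ i, Real.cos (y i) = Real.cos (y j) + ∑ i ∈ Q, Real.cos (y i) := by
          rw [← hsplitc, hPsumc]
      _ ≤ Real.cos (y j) + ((n:ℝ)-1) * Real.cos ((2*π - y j)/((n:ℝ)-1)) := by linarith
      _ ≤ _ := hh
  · -- k = 2
    obtain ⟨a, b, hab, hPab⟩ := Finset.card_eq_two.mp hPc
    have haP : a ∈ P := by rw [hPab]; simp
    have hbP : b ∈ P := by rw [hPab]; simp
    have hQcard : Q.card = n - 2 := by omega
    have hQcR : (Q.card : ℝ) = (n:ℝ) - 2 := by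
      rw [hQcard]; push_cast [Nat.cast_sub (by omega : 2 ≤ n)]; ring
    have hQne : Q.Nonempty := Finset.card_pos.mp (by omega)
    have hPsum : ∑ i ∈ P, y i = y a + y b := by rw [hPab, Finset.sum_pair hab]
    have hPsumc : ∑ i ∈ P, Real.cos (y i) = Real.cos (y a) + Real.cos (y b) := by
      rw [hPab, Finset.sum_pair hab]
    set r := ∑ i ∈ Q, y i with hr
    have hrπ : r ≤ π := by
      have := hPbig a haP; have := hPbig b hbP
      rw [hPsum] at hsplity; linarith
    have hpair : Real.cos (y a) + Real.cos (y b) ≤ -1 - Real.cos (y a + y b) :=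
      cos_pair (h0 a) (hpi a) (h0 b) (hpi b)
        (by have := hPbig a haP; have := hPbig b hbP; linarith)
    have hcosab : Real.cos (y a + y b) = Real.cos r := by
      have : y a + y b = 2*π - r := by rw [hPsum] at hsplity; linarith
      rw [this, Real.cos_two_pi_sub]
    have hjen := hQjen hQne
    rw [hQcR] at hjen
    have hpsi := psi_le (m := (n:ℝ)-2) (by linarith) hQ0 hrπ
    rw [show (n:ℝ)-2+1 = (n:ℝ)-1 by ring] at hpsi
    apply le_max_of_le_left
    calc ∑ i, Real.cos (y i)
        = (Real.cos (y a) + Real.cos (y b)) + ∑ i ∈ Q, Real.cos (y i) := by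
          rw [← hsplitc, hPsumc]
      _ ≤ (-1 - Real.cos r) + ((n:ℝ)-2) * Real.cos (r/((n:ℝ)-2)) := by
          rw [← hcosab]; linarith
      _ ≤ _ := by linarith [hpsi]
  · -- k = 3
    obtain ⟨a, b, c, hab, hac, hbc, hPabc⟩ := Finset.card_eq_three.mp hPc
    have haP : a ∈ P := by rw [hPabc]; simp
    have hbP : b ∈ P := by rw [hPabc]; simp
    have hcP : c ∈ P := by rw [hPabc]; simp
    have hQcard : Q.card = n - 3 := by omega
    have hQcR : (Q.card : ℝ) = (n:ℝ) - 3 := by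
      rw [hQcard]; push_cast [Nat.cast_sub (by omega : 3 ≤ n)]; ring
    have hQne : Q.Nonempty := Finset.card_pos.mp (by omega)
    have hPsum : ∑ i ∈ P, y i = y a + y b + y c := by
      rw [hPabc]
      rw [Finset.sum_insert (by simp [hab, hac]), Finset.sum_pair hbc]
      ring
    have hPsumc : ∑ i ∈ P, Real.cos (y i) = Real.cos (y a) + Real.cos (y b) + Real.cos (y c) := by
      rw [hPabc]
      rw [Finset.sum_insert (by simp [hab, hac]), Finset.sum_pair hbc]
      ring
    set r := ∑ i ∈ Q, y i with hr
    have hrhalf : r ≤ π/2 := by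
      have := hPbig a haP; have := hPbig b hbP; have := hPbig c hcP
      rw [hPsum] at hsplity; linarith
    have hpair : Real.cos (y a) + Real.cos (y b) ≤ -1 - Real.cos (y a + y b) :=
      cos_pair (h0 a) (hpi a) (h0 b) (hpi b)
        (by have := hPbig a haP; have := hPbig b hbP; linarith)
    have hyab : y a + y b = 2*π - (r + y c) := by rw [hPsum] at hsplity; linarith
    have hcosab : Real.cos (y a + y b) = Real.cos (r + y c) := by
      rw [hyab, Real.cos_two_pi_sub]
    have hsub : Real.cos (y c) - Real.cos (r + y c) ≤ Real.sin r := by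
      apply cos_sub_cos_le (hPbig c hcP).le hQ0
      have := hPbig a haP; have := hPbig b hbP
      rw [hPsum] at hsplity; linarith
    have hjen := hQjen hQne
    rw [hQcR] at hjen
    have hxi := xi_le (m := (n:ℝ)-3) (by linarith) hQ0 hrhalf
    have hqi := q_ineq (q := (n:ℝ)-2) (by
      rcases (by omega : n = 4 ∨ n = 5 ∨ 6 ≤ n) with h | h | h
      · left; rw [h]; norm_num
      · right; left; rw [h]; norm_num
      · right; right
        have : (6:ℝ) ≤ (n:ℝ) := by exact_mod_cast h
        linarith)
    rw [show (n:ℝ)-3+1 = (n:ℝ)-2 by ring] at hxi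
    rw [show (n:ℝ)-2+1 = (n:ℝ)-1 by ring] at hqi
    apply le_max_of_le_left
    calc ∑ i, Real.cos (y i)
        = (Real.cos (y a) + Real.cos (y b) + Real.cos (y c)) + ∑ i ∈ Q, Real.cos (y i) := by
          rw [← hsplitc, hPsumc]
      _ ≤ (-1 + Real.sin r) + ((n:ℝ)-3) * Real.cos (r/((n:ℝ)-3)) := by
          rw [← hcosab] at hsub
          linarith
      _ ≤ ((n:ℝ)-2) * Real.cos (π/(2*((n:ℝ)-2))) - 1 := hxi
      _ ≤ _ := by linarith [hqi]

lemma key_all (n : ℕ) (hn : 2 ≤ n) (y : Fin n → ℝ) (h0 : ∀ i, 0 ≤ y i)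
    (hpi : ∀ i, y i ≤ π) (hs : ∑ i, y i = 2*π) :
    ∑ i, Real.cos (y i)
      ≤ max (((n:ℝ)-1) * Real.cos (π/((n:ℝ)-1)) - 1) ((n:ℝ) * Real.cos (2*π/(n:ℝ))) := by
  have hπ := Real.pi_pos
  rcases (by omega : n = 2 ∨ n = 3 ∨ 4 ≤ n) with rfl | rfl | h4
  · have hs2 : y 0 + y 1 = 2*π := by rw [← hs, Fin.sum_univ_two]
    have hy0 : y 0 = π := by have := hpi 0; have := hpi 1; linarith
    have hy1 : y 1 = π := by have := hpi 0; have := hpi 1; linarith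
    apply le_max_of_le_left
    rw [Fin.sum_univ_two, hy0, hy1, Real.cos_pi]
    norm_num
  · have hs3 : y 0 + y 1 + y 2 = 2*π := by rw [← hs, Fin.sum_univ_three]
    have hy2 : y 2 = 2*π - (y 0 + y 1) := by linarith
    have hpair : Real.cos (y 0) + Real.cos (y 1) ≤ -1 - Real.cos (y 0 + y 1) :=
      cos_pair (h0 0) (hpi 0) (h0 1) (hpi 1) (by have := hpi 2; linarith)
    have hc2 : Real.cos (y 2) = Real.cos (y 0 + y 1) := by
      rw [hy2, Real.cos_two_pi_sub]
    apply le_max_of_le_left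
    rw [Fin.sum_univ_three, hc2]
    have : ((3:ℕ):ℝ) - 1 = 2 := by norm_num
    rw [this, show π/(2:ℝ) = π/2 by norm_num, Real.cos_pi_div_two]
    linarith
  · exact key_lemma n h4 y h0 hpi hs

theorem polygon_cos_sum_bound (n : ℕ) (hn : 2 ≤ n) (x : Fin n → ℝ)
    (hx0 : ∀ i, 0 ≤ x i) (hxpi : ∀ i, x i ≤ Real.pi)
    (hsum : ∑ i, x i = (n - 2) * Real.pi) :
    ∑ i, Real.cos (x i) ≥
      min (1 + (n - 1) * Real.cos ((n - 2) * Real.pi / (n - 1)))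
        (n * Real.cos ((n - 2) * Real.pi / n)) := by
  have hπ := Real.pi_pos
  have hn2 : (2:ℝ) ≤ (n:ℝ) := by exact_mod_cast hn
  set y : Fin n → ℝ := fun i => π - x i with hy
  have h0 : ∀ i, 0 ≤ y i := fun i => by simp [hy]; linarith [hxpi i]
  have hpi' : ∀ i, y i ≤ π := fun i => by simp [hy]; linarith [hx0 i]
  have hsy : ∑ i, y i = 2*π := by
    rw [hy]
    rw [Finset.sum_sub_distrib, Finset.sum_const, Finset.card_univ, Fintype.card_fin, hsum]
    push_cast
    ring
  have hkey := key_all n hn y h0 hpi' hsy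
  have hcos : ∀ i, Real.cos (x i) = -Real.cos (y i) := by
    intro i
    rw [show x i = π - y i by simp [hy], Real.cos_pi_sub]
  have hsumc : ∑ i, Real.cos (x i) = -∑ i, Real.cos (y i) := by
    rw [← Finset.sum_neg_distrib]
    exact Finset.sum_congr rfl fun i _ => hcos i
  have hA : ((n:ℝ) - 2) * π / ((n:ℝ) - 1) = π - π/((n:ℝ)-1) := by
    have h1 : (n:ℝ) - 1 ≠ 0 := by linarith
    field_simp
    ring
  have hB : ((n:ℝ) - 2) * π / (n:ℝ) = π - 2*π/(n:ℝ) := by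
    have h1 : (n:ℝ) ≠ 0 := by linarith
    field_simp
  rw [ge_iff_le, hsumc, hA, hB, Real.cos_pi_sub, Real.cos_pi_sub]
  have e1 : 1 + ((n:ℝ) - 1) * -Real.cos (π/((n:ℝ)-1))
      = -((((n:ℝ)-1) * Real.cos (π/((n:ℝ)-1))) - 1) := by ring
  have e2 : (n:ℝ) * -Real.cos (2*π/(n:ℝ)) = -((n:ℝ) * Real.cos (2*π/(n:ℝ))) := by ring
  rw [e1, e2, min_neg_neg]
  exact neg_le_neg hkey
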